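/- Let G be a finite connected discrete graph without loops and let Γ be its associated metric graph. Let T be a spanning tree of Γ, let e be an edge of Γ not contained in T, and let Z(T, e) be the unique cycle in T ∪ e. Let D be an effective divisor on Γ equivalent to the canonical divisor K_G and whose support contains a point p_i from the relative interior of each edge e_i ≠ e contained in the complement of T. If f is a tropical rational function on Γ with div(f) = D − K_G, then the locus of points of Γ where f achieves its minimum value is equal to Z(T, e). -/

import Mathlib

open scoped Classical

noncomputable section

/-- A finite connected-type datum: a finite discrete (multi)graph without
loops together with a positive length attached to each edge; this is the
combinatorial model of a metric graph `Γ` (the geometric realization of the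
graph in which the edge `e` is an interval of length `len e`). -/
structure LooplessMetricGraph where
  /-- the vertices -/
  V : Type
  /-- the edges (multiple edges between two vertices are allowed) -/
  E : Type
  [fintypeV : Fintype V]
  [fintypeE : Fintype E]
  nonemptyV : Nonempty V
  src : E → V
  dst : E → V
  /-- the graph has no loops -/
  no_loops : ∀ e, src e ≠ dst e
  /-- the length of each edge of the metric graph -/
  len : E → ℝ
  len_pos : ∀ e, 0 < len e

attribute [instance] LooplessMetricGraph.fintypeV LooplessMetricGraph.fintypeE

namespace LooplessMetricGraph

variable (G : LooplessMetricGraph)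

/-- The points of the metric graph `Γ`: a vertex, or an interior point of an
edge `e` at arclength distance `t ∈ (0, len e)` from its source. -/
abbrev Point : Type := G.V ⊕ (Σ e : G.E, {t : ℝ // 0 < t ∧ t < G.len e})

/-- Two vertices are joined by an edge belonging to the edge set `S`. -/
def Step (S : Set G.E) (v w : G.V) : Prop :=
  ∃ e ∈ S, (G.src e = v ∧ G.dst e = w) ∨ (G.src e = w ∧ G.dst e = v)

/-- The vertices `v` and `w` are joined by a path of edges in `S`. -/
def Reaches (S : Set G.E) (v w : G.V) : Prop :=
  Relation.ReflTransGen (G.Step S) v w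

/-- The edge set `S` connects all vertices of the graph. -/
def SpanningConnected (S : Set G.E) : Prop := ∀ v w, G.Reaches S v w

/-- The graph is connected. -/
def Connected : Prop := G.SpanningConnected Set.univ

/-- `T` is a spanning tree: its edges connect all the vertices, and removing
any one of them destroys this property. -/
def IsSpanningTree (T : Set G.E) : Prop :=
  G.SpanningConnected T ∧ ∀ e ∈ T, ¬ G.SpanningConnected (T \ {e})

/-- An edge is a bridge if it is not contained in any non-trivial cycle,
equivalently (for a connected graph) if its removal disconnects the graph. -/
def IsBridge (e : G.E) : Prop := ¬ G.SpanningConnected (Set.univ \ {e})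

/-- The set of points of `Γ` lying on the closed edge `e`. -/
def onEdge (e : G.E) : Set G.Point :=
  {p | p = Sum.inl (G.src e) ∨ p = Sum.inl (G.dst e) ∨
    ∃ t, p = Sum.inr ⟨e, t⟩}

/-- For a spanning tree `T` and an edge `e ∉ T`, the unique cycle `Z(T, e)`
in `T ∪ {e}`, as a set of points of `Γ`: the union of the closed edges of
`T ∪ {e}` whose removal does not disconnect `T ∪ {e}`. -/
def cycleSet (T : Set G.E) (e : G.E) : Set G.Point :=
  ⋃ e' ∈ {e' ∈ T ∪ {e} | G.SpanningConnected ((T ∪ {e}) \ {e'})}, G.onEdge e'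

/-- The valency of a vertex. -/
def valAt (v : G.V) : ℕ :=
  (Finset.univ.filter fun e => G.src e = v).card +
    (Finset.univ.filter fun e => G.dst e = v).card

/-- The canonical divisor `K_G = Σ_v (val(v) − 2)·v` of the graph, as a
function on the points of `Γ` supported on the vertices. -/
def canonical : G.Point → ℤ :=
  fun p => match p with
    | Sum.inl v => (G.valAt v : ℤ) - 2
    | Sum.inr _ => 0

/-- The restriction of a function on `Γ` to the closed edge `e`, as a
function of the arclength parameter `t ∈ [0, len e]` (junk values outside
this interval). -/
def edgeFun (f : G.Point → ℝ) (e : G.E) : ℝ → ℝ := fun t =>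
  if h : 0 < t ∧ t < G.len e then f (Sum.inr ⟨e, t, h⟩)
  else if t ≤ 0 then f (Sum.inl (G.src e)) else f (Sum.inl (G.dst e))

end LooplessMetricGraph

/-- `g` is piecewise affine with integer slopes on the interval `[a, b]`. -/
def PwIntAffineOn (g : ℝ → ℝ) (a b : ℝ) : Prop :=
  ∃ (n : ℕ) (t : Fin (n + 1) → ℝ) (s : Fin n → ℤ) (c : Fin n → ℝ),
    t 0 = a ∧ t (Fin.last n) = b ∧ Monotone t ∧
    ∀ i : Fin n, ∀ x ∈ Set.Icc (t i.castSucc) (t i.succ),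
      g x = (s i : ℝ) * x + c i

/-- `g` has outgoing slope `s` at `t` in the increasing direction. -/
def HasRightSlope (g : ℝ → ℝ) (t s : ℝ) : Prop :=
  Filter.Tendsto (fun h : ℝ => (g (t + h) - g t) / h)
    (nhdsWithin 0 (Set.Ioi 0)) (nhds s)

/-- `g` has outgoing slope `s` at `t` in the decreasing direction. -/
def HasLeftSlope (g : ℝ → ℝ) (t s : ℝ) : Prop :=
  Filter.Tendsto (fun h : ℝ => (g (t - h) - g t) / h)
    (nhdsWithin 0 (Set.Ioi 0)) (nhds s)

namespace LooplessMetricGraph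

variable (G : LooplessMetricGraph)

/-- `f` is a tropical rational function on `Γ`: a continuous piecewise affine
real-valued function with integer slopes. -/
def IsTropicalRational (f : G.Point → ℝ) : Prop :=
  ∀ e : G.E, PwIntAffineOn (G.edgeFun f e) 0 (G.len e)

/-- The sum of the outgoing slopes of `f` at the point `p` of `Γ` equals `c`. -/
def OutSlopeSum (f : G.Point → ℝ) (p : G.Point) (c : ℝ) : Prop :=
  match p with
  | Sum.inl v => ∃ sOut sIn : G.E → ℝ,
      (∀ e, G.src e = v → HasRightSlope (G.edgeFun f e) 0 (sOut e)) ∧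
      (∀ e, G.dst e = v → HasLeftSlope (G.edgeFun f e) (G.len e) (sIn e)) ∧
      (∑ e ∈ Finset.univ.filter fun e => G.src e = v, sOut e) +
        (∑ e ∈ Finset.univ.filter fun e => G.dst e = v, sIn e) = c
  | Sum.inr q => ∃ sr sl : ℝ,
      HasRightSlope (G.edgeFun f q.1) q.2.1 sr ∧
      HasLeftSlope (G.edgeFun f q.1) q.2.1 sl ∧ sr + sl = c

/-- `div(f) = D`: `f` is a tropical rational function on `Γ` and, at every
point `p` of `Γ`, the sum of the incoming slopes of `f` (that is, minus the
sum of the outgoing slopes) equals `D p`. -/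
def HasDivisor (f : G.Point → ℝ) (D : G.Point → ℤ) : Prop :=
  G.IsTropicalRational f ∧ ∀ p, G.OutSlopeSum f p (-(D p : ℝ))

end LooplessMetricGraph


namespace LooplessMetricGraph

variable {G : LooplessMetricGraph}

/-! ### Reachability lemmas -/

lemma Step.symm {S : Set G.E} {v w : G.V} (h : G.Step S v w) : G.Step S w v := by
  obtain ⟨c, hc, hor⟩ := h
  exact ⟨c, hc, hor.symm⟩

lemma Reaches.refl {S : Set G.E} {v : G.V} : G.Reaches S v v :=
  Relation.ReflTransGen.refl

lemma Reaches.trans {S : Set G.E} {u v w : G.V} (h1 : G.Reaches S u v)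
    (h2 : G.Reaches S v w) : G.Reaches S u w :=
  Relation.ReflTransGen.trans h1 h2

lemma Reaches.tail' {S : Set G.E} {u v w : G.V} (h1 : G.Reaches S u v)
    (h2 : G.Step S v w) : G.Reaches S u w :=
  Relation.ReflTransGen.tail h1 h2

lemma Reaches.mono {S S' : Set G.E} (h : S ⊆ S') {v w : G.V}
    (hr : G.Reaches S v w) : G.Reaches S' v w := by
  induction hr with
  | refl => exact .refl
  | tail _ hstep ih =>
      obtain ⟨c, hc, hor⟩ := hstep
      exact ih.tail' ⟨c, h hc, hor⟩

lemma Reaches.symm {S : Set G.E} {v w : G.V} (hr : G.Reaches S v w) :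
    G.Reaches S w v := by
  induction hr with
  | refl => exact .refl
  | tail _ hstep ih =>
      exact Reaches.trans (Relation.ReflTransGen.single hstep.symm) ih

/-- Rerouting: if the endpoints of `c` are joined avoiding `c`, then removing
`c` does not change reachability. -/
lemma Reaches.avoid {S : Set G.E} {c : G.E}
    (hrt : G.Reaches (S \ {c}) (G.src c) (G.dst c)) {v w : G.V}
    (h : G.Reaches S v w) : G.Reaches (S \ {c}) v w := by
  induction h with
  | refl => exact .refl
  | tail _ hstep ih =>
      obtain ⟨d, hd, hor⟩ := hstep
      by_cases hdc : d = c
      · subst hdc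
        rcases hor with ⟨h1, h2⟩ | ⟨h1, h2⟩
        · exact ih.trans (h1 ▸ h2 ▸ hrt)
        · exact ih.trans (h1 ▸ h2 ▸ hrt.symm)
      · exact ih.tail' ⟨d, ⟨hd, by simp [hdc]⟩, hor⟩

/-- Crossing lemma: a walk in `insert c S` either stays in `S`, or visits
both endpoints of `c` in a structured way. -/
lemma reaches_insert_cases {S : Set G.E} {c : G.E} {u w : G.V}
    (h : G.Reaches (insert c S) u w) :
    G.Reaches S u w ∨ ((G.Reaches S u (G.src c) ∨ G.Reaches S u (G.dst c)) ∧
      (G.Reaches S (G.src c) w ∨ G.Reaches S (G.dst c) w)) := by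
  induction h with
  | refl => exact Or.inl .refl
  | tail _ hstep ih =>
      obtain ⟨d, hd, hor⟩ := hstep
      rcases Set.mem_insert_iff.1 hd with rfl | hdS
      · rcases hor with ⟨h1, h2⟩ | ⟨h1, h2⟩
        · subst h1; subst h2
          refine Or.inr ⟨?_, Or.inr .refl⟩
          rcases ih with h' | ⟨h1', _⟩
          · exact Or.inl h'
          · exact h1'
        · subst h1; subst h2
          refine Or.inr ⟨?_, Or.inl .refl⟩
          rcases ih with h' | ⟨h1', _⟩
          · exact Or.inr h'
          · exact h1'
      · have hstep' : G.Step S _ _ := ⟨d, hdS, hor⟩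
        rcases ih with h' | ⟨h1', h2'⟩
        · exact Or.inl (h'.tail' hstep')
        · refine Or.inr ⟨h1', ?_⟩
          rcases h2' with h2' | h2'
          · exact Or.inl (h2'.tail' hstep')
          · exact Or.inr (h2'.tail' hstep')

end LooplessMetricGraph
namespace LooplessMetricGraph

section Defs
variable (G : LooplessMetricGraph)

/-- `v` is an endpoint of the edge `c`. -/
def IsEnd (c : G.E) (v : G.V) : Prop := G.src c = v ∨ G.dst c = v

/-- The endpoint of `c` different from `v`. -/
def otherEnd (c : G.E) (v : G.V) : G.V :=
  if G.src c = v then G.dst c else G.src c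

/-- `c` is a bridge relative to the edge set `S`. -/
def BridgeIn (S : Set G.E) (c : G.E) : Prop :=
  ¬ G.Reaches (S \ {c}) (G.src c) (G.dst c)

/-- The endpoint of `c` far from the root `r` (relative to `S \ {c}`). -/
def farEnd (S : Set G.E) (c : G.E) (r : G.V) : G.V :=
  if G.Reaches (S \ {c}) r (G.src c) then G.dst c else G.src c

end Defs

variable {G : LooplessMetricGraph}

lemma isEnd_otherEnd {c : G.E} {v : G.V} (hv : G.IsEnd c v) :
    G.IsEnd c (G.otherEnd c v) := by
  unfold otherEnd; split_ifs with h
  · exact Or.inr rfl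
  · exact Or.inl rfl

lemma step_otherEnd {c : G.E} {v : G.V} (hv : G.IsEnd c v) {S' : Set G.E}
    (hc : c ∈ S') : G.Step S' (G.otherEnd c v) v := by
  unfold otherEnd; split_ifs with h
  · exact ⟨c, hc, Or.inr ⟨h, rfl⟩⟩
  · rcases hv with h' | h'
    · exact absurd h' h
    · exact ⟨c, hc, Or.inl ⟨rfl, h'⟩⟩

lemma eq_or_eq_otherEnd {c : G.E} {v x : G.V} (hv : G.IsEnd c v)
    (hx : G.IsEnd c x) : x = v ∨ x = G.otherEnd c v := by
  unfold otherEnd; split_ifs with h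
  · rcases hx with h' | h'
    · exact Or.inl (h ▸ h'.symm)
    · exact Or.inr h'.symm
  · rcases hv with h' | h'
    · exact absurd h' h
    · rcases hx with h'' | h''
      · exact Or.inr h''.symm
      · exact Or.inl (h' ▸ h''.symm)

lemma reaches_end_cases {c : G.E} {v : G.V} (hv : G.IsEnd c v) {S' : Set G.E}
    {r : G.V} (h : G.Reaches S' r (G.src c) ∨ G.Reaches S' r (G.dst c))
    (hnv : ¬ G.Reaches S' r v) : G.Reaches S' r (G.otherEnd c v) := by
  unfold otherEnd; split_ifs with hs
  · rcases h with h | h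
    · exact absurd (hs ▸ h) hnv
    · exact h
  · rcases hv with h' | h'
    · exact absurd h' hs
    · rcases h with h | h
      · exact h
      · exact absurd (h' ▸ h) hnv

lemma insert_diff_self_of_mem {S : Set G.E} {c : G.E} (hc : c ∈ S) :
    insert c (S \ {c}) = S := by
  rw [Set.insert_diff_singleton, Set.insert_eq_self.2 hc]

lemma reaches_some_end {S : Set G.E} (hS : G.SpanningConnected S) {c : G.E}
    (hc : c ∈ S) (r : G.V) :
    G.Reaches (S \ {c}) r (G.src c) ∨ G.Reaches (S \ {c}) r (G.dst c) := by
  have h := hS r (G.src c)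
  rw [← insert_diff_self_of_mem hc] at h
  rcases reaches_insert_cases h with h' | ⟨h1, _⟩
  · exact Or.inl h'
  · exact h1

lemma farEnd_isEnd (S : Set G.E) (c : G.E) (r : G.V) :
    G.IsEnd c (G.farEnd S c r) := by
  unfold farEnd; split_ifs with h
  · exact Or.inr rfl
  · exact Or.inl rfl

lemma farEnd_not_reaches {S : Set G.E} {c : G.E} (hbr : G.BridgeIn S c)
    (r : G.V) : ¬ G.Reaches (S \ {c}) r (G.farEnd S c r) := by
  unfold farEnd; split_ifs with h
  · intro h'
    exact hbr (h.symm.trans h')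
  · exact h

lemma farEnd_ne {S : Set G.E} {c : G.E} (hbr : G.BridgeIn S c) (r : G.V) :
    G.farEnd S c r ≠ r := by
  intro h
  apply farEnd_not_reaches hbr r
  rw [h]
  exact Reaches.refl

/-- Two distinct edges cannot have a common endpoint that is `far` from `r`
for both of them. -/
lemma far_eq_contra {S : Set G.E} (hS : G.SpanningConnected S) {c₁ c₂ : G.E}
    (h₁ : c₁ ∈ S) (h₂ : c₂ ∈ S) (hne : c₁ ≠ c₂) {r v : G.V}
    (hv₁ : G.IsEnd c₁ v) (hv₂ : G.IsEnd c₂ v)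
    (hu₁ : ¬ G.Reaches (S \ {c₁}) r v) (hu₂ : ¬ G.Reaches (S \ {c₂}) r v) :
    False := by
  have hy₂ : G.Reaches (S \ {c₂}) r (G.otherEnd c₂ v) :=
    reaches_end_cases hv₂ (reaches_some_end hS h₂ r) hu₂
  have hc₁mem : c₁ ∈ S \ {c₂} := ⟨h₁, by simp [hne]⟩
  rw [← insert_diff_self_of_mem hc₁mem] at hy₂
  set S₀ : Set G.E := (S \ {c₂}) \ {c₁} with hS₀
  have hS₀sub₁ : S₀ ⊆ S \ {c₁} := fun x hx => ⟨hx.1.1, hx.2⟩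
  have hS₀sub₂ : S₀ ⊆ S \ {c₂} := fun x hx => hx.1
  have hc₂mem : c₂ ∈ S \ {c₁} := ⟨h₂, by simp [Ne.symm hne]⟩
  rcases reaches_insert_cases hy₂ with h' | ⟨h1, _⟩
  · -- r reaches otherEnd c₂ v avoiding both, then step c₂ lands at v
    exact hu₁ ((h'.mono hS₀sub₁).tail' (step_otherEnd hv₂ hc₂mem))
  · by_cases hrv : G.Reaches S₀ r v
    · exact hu₁ (hrv.mono hS₀sub₁)
    · have h1' : G.Reaches S₀ r (G.otherEnd c₁ v) := reaches_end_cases hv₁ h1 hrv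
      exact hu₂ ((h1'.mono hS₀sub₂).tail' (step_otherEnd hv₁ ⟨h₁, by simp [hne]⟩))

end LooplessMetricGraph
namespace LooplessMetricGraph

section Defs
variable (G : LooplessMetricGraph)

/-- Degree of `v` in the edge set `EM`. -/
def degIn (EM : Set G.E) (v : G.V) : ℕ :=
  (Finset.univ.filter fun c => c ∈ EM ∧ G.src c = v).card +
  (Finset.univ.filter fun c => c ∈ EM ∧ G.dst c = v).card

end Defs

variable {G : LooplessMetricGraph}

lemma handshake (EM : Set G.E) :
    ∑ v : G.V, G.degIn EM v = 2 * (Finset.univ.filter fun c => c ∈ EM).card := by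
  classical
  unfold degIn
  rw [Finset.sum_add_distrib, two_mul]
  congr 1
  · rw [Finset.card_eq_sum_card_fiberwise
      (f := G.src) (t := Finset.univ) (fun x _ => Finset.mem_univ _)]
    exact Finset.sum_congr rfl fun v _ => by rw [Finset.filter_filter]
  · rw [Finset.card_eq_sum_card_fiberwise
      (f := G.dst) (t := Finset.univ) (fun x _ => Finset.mem_univ _)]
    exact Finset.sum_congr rfl fun v _ => by rw [Finset.filter_filter]

/-- Main counting lemma: there is no nonempty min-degree-2 edge set `EM`
containing a bridge `c`, all of whose edges on the far side of `c` (as seen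
from `a`) are bridges. -/
lemma no_two_deg {S : Set G.E} (hS : G.SpanningConnected S)
    {EM : Set G.E} (hsub : EM ⊆ S) {c : G.E} (hc : c ∈ EM)
    (hbrc : G.BridgeIn S c) (a : G.V)
    (hbr : ∀ c' ∈ EM, c' ≠ c → ¬ G.Reaches (S \ {c}) a (G.src c') → G.BridgeIn S c')
    (hdeg : ∀ v : G.V, (∃ d ∈ EM, G.IsEnd d v) → 2 ≤ G.degIn EM v) : False := by
  classical
  obtain ⟨B, hB⟩ : ∃ B : Set G.V, B = {v | ¬ G.Reaches (S \ {c}) a v} := ⟨_, rfl⟩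
  have hBmem : ∀ v, v ∈ B ↔ ¬ G.Reaches (S \ {c}) a v := fun v => by
    rw [hB]; exact Iff.rfl
  set r : G.V := G.farEnd S c a with hr
  have hrB : r ∈ B := (hBmem r).2 (farEnd_not_reaches hbrc a)
  have hrend : G.IsEnd c r := farEnd_isEnd S c a
  have hnrB : G.otherEnd c r ∉ B := by
    rw [hBmem, not_not]
    exact reaches_end_cases hrend (reaches_some_end hS (hsub hc) a)
      ((hBmem r).1 hrB)
  have hside : ∀ d ∈ S, d ≠ c → (G.src d ∈ B ↔ G.dst d ∈ B) := by
    intro d hd hdc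
    have hstep : G.Step (S \ {c}) (G.src d) (G.dst d) :=
      ⟨d, ⟨hd, by simp [hdc]⟩, Or.inl ⟨rfl, rfl⟩⟩
    rw [hBmem, hBmem]
    exact not_congr ⟨fun h => h.tail' hstep, fun h => h.tail' hstep.symm⟩
  obtain ⟨EB, hEBdef⟩ : ∃ EB : Set G.E, EB = {d | d ∈ EM ∧ d ≠ c ∧ G.src d ∈ B} :=
    ⟨_, rfl⟩
  have hEBmem : ∀ d, d ∈ EB ↔ (d ∈ EM ∧ d ≠ c ∧ G.src d ∈ B) := fun d => by
    rw [hEBdef]; exact Iff.rfl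
  have hEBbr : ∀ d ∈ EB, G.BridgeIn S d := fun d hd => by
    obtain ⟨h1, h2, h3⟩ := (hEBmem d).1 hd
    exact hbr d h1 h2 ((hBmem _).1 h3)
  have hEBends : ∀ d ∈ EB, G.src d ∈ B ∧ G.dst d ∈ B := fun d hd => by
    obtain ⟨h1, h2, h3⟩ := (hEBmem d).1 hd
    exact ⟨h3, (hside d (hsub h1) h2).1 h3⟩
  have hmemEB : ∀ d ∈ EM, ∀ v, G.IsEnd d v → v ∈ B → v ≠ r → d ∈ EB := by
    intro d hd v hvend hvB hvr
    have hdc : d ≠ c := by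
      rintro rfl
      rcases eq_or_eq_otherEnd hrend hvend with h | h
      · exact hvr h
      · exact hnrB (h ▸ hvB)
    refine (hEBmem d).2 ⟨hd, hdc, ?_⟩
    rcases hvend with h | h
    · rwa [h]
    · exact (hside d (hsub hd) hdc).2 (by rwa [h])
  set Wf : Finset G.V :=
    Finset.univ.filter (fun v => v ∈ B ∧ ∃ d ∈ EM, G.IsEnd d v) with hWf
  have hrW : r ∈ Wf := Finset.mem_filter.2 ⟨Finset.mem_univ _, hrB, c, hc, hrend⟩
  -- degree bound away from r
  have hdeg2 : ∀ v ∈ Wf, v ≠ r → 2 ≤ G.degIn EB v := by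
    intro v hv hvr
    obtain ⟨-, hvB, hinc⟩ := Finset.mem_filter.1 hv
    refine le_trans (hdeg v hinc) ?_
    unfold degIn
    refine Nat.add_le_add (Finset.card_le_card ?_) (Finset.card_le_card ?_)
    · intro d hd
      obtain ⟨-, hdEM, hsrc⟩ := Finset.mem_filter.1 hd
      exact Finset.mem_filter.2 ⟨Finset.mem_univ _,
        hmemEB d hdEM v (Or.inl hsrc) hvB hvr, hsrc⟩
    · intro d hd
      obtain ⟨-, hdEM, hdst⟩ := Finset.mem_filter.1 hd
      exact Finset.mem_filter.2 ⟨Finset.mem_univ _,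
        hmemEB d hdEM v (Or.inr hdst) hvB hvr, hdst⟩
  -- degree bound at r
  have hdeg1 : 1 ≤ G.degIn EB r := by
    have h2 := hdeg r ⟨c, hc, hrend⟩
    have hmem1 : ∀ d ∈ (Finset.univ.filter fun d => d ∈ EM ∧ G.src d = r), d ≠ c →
        d ∈ (Finset.univ.filter fun d => d ∈ EB ∧ G.src d = r) := by
      intro d hd hdc
      obtain ⟨-, hdEM, hsrc⟩ := Finset.mem_filter.1 hd
      exact Finset.mem_filter.2 ⟨Finset.mem_univ _,
        (hEBmem d).2 ⟨hdEM, hdc, by rwa [hsrc]⟩, hsrc⟩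
    have hmem2 : ∀ d ∈ (Finset.univ.filter fun d => d ∈ EM ∧ G.dst d = r), d ≠ c →
        d ∈ (Finset.univ.filter fun d => d ∈ EB ∧ G.dst d = r) := by
      intro d hd hdc
      obtain ⟨-, hdEM, hdst⟩ := Finset.mem_filter.1 hd
      exact Finset.mem_filter.2 ⟨Finset.mem_univ _,
        (hEBmem d).2 ⟨hdEM, hdc, (hside d (hsub hdEM) hdc).2 (by rwa [hdst])⟩, hdst⟩
    have he1 : (Finset.univ.filter fun d => d ∈ EM ∧ G.src d = r).card - 1 ≤
        (Finset.univ.filter fun d => d ∈ EB ∧ G.src d = r).card :=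
      le_trans (Finset.pred_card_le_card_erase)
        (Finset.card_le_card (fun d hd =>
          hmem1 d (Finset.mem_of_mem_erase hd) (Finset.ne_of_mem_erase hd)))
    have he2 : (Finset.univ.filter fun d => d ∈ EM ∧ G.dst d = r).card - 1 ≤
        (Finset.univ.filter fun d => d ∈ EB ∧ G.dst d = r).card :=
      le_trans (Finset.pred_card_le_card_erase)
        (Finset.card_le_card (fun d hd =>
          hmem2 d (Finset.mem_of_mem_erase hd) (Finset.ne_of_mem_erase hd)))
    unfold degIn at h2 ⊢
    by_cases hc1 : G.src c = r
    · have hcA2 : c ∉ (Finset.univ.filter fun d => d ∈ EM ∧ G.dst d = r) := by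
        intro h
        exact G.no_loops c (hc1.trans ((Finset.mem_filter.1 h).2.2).symm)
      have hA2B : (Finset.univ.filter fun d => d ∈ EM ∧ G.dst d = r).card ≤
          (Finset.univ.filter fun d => d ∈ EB ∧ G.dst d = r).card :=
        Finset.card_le_card (fun d hd => hmem2 d hd (fun h => hcA2 (h ▸ hd)))
      omega
    · have hcA1 : c ∉ (Finset.univ.filter fun d => d ∈ EM ∧ G.src d = r) :=
        fun h => hc1 ((Finset.mem_filter.1 h).2.2)
      have hA1B : (Finset.univ.filter fun d => d ∈ EM ∧ G.src d = r).card ≤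
          (Finset.univ.filter fun d => d ∈ EB ∧ G.src d = r).card :=
        Finset.card_le_card (fun d hd => hmem1 d hd (fun h => hcA1 (h ▸ hd)))
      omega
  -- handshake bound
  have hsum1 : ∑ v ∈ Wf, G.degIn EB v ≤
      2 * (Finset.univ.filter fun d => d ∈ EB).card :=
    le_of_le_of_eq (Finset.sum_le_sum_of_subset (Finset.subset_univ _)) (handshake EB)
  have hsum2 : 2 * (Wf.card - 1) + 1 ≤ ∑ v ∈ Wf, G.degIn EB v := by
    rw [← Finset.sum_erase_add _ _ hrW]
    have h1 : 2 * (Wf.card - 1) ≤ ∑ v ∈ Wf.erase r, G.degIn EB v := by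
      calc 2 * (Wf.card - 1) = (Wf.erase r).card * 2 := by
            rw [Finset.card_erase_of_mem hrW]; ring
        _ = ∑ _v ∈ Wf.erase r, 2 := by rw [Finset.sum_const, smul_eq_mul]
        _ ≤ _ := Finset.sum_le_sum (fun v hv =>
            hdeg2 v (Finset.mem_of_mem_erase hv) (Finset.ne_of_mem_erase hv))
    omega
  -- injection
  have hinj : (Finset.univ.filter fun d => d ∈ EB).card ≤ (Wf.erase r).card := by
    refine Finset.card_le_card_of_injOn (fun d => G.farEnd S d r) ?_ ?_
    · intro d hd
      have hdEB : d ∈ EB := (Finset.mem_filter.1 hd).2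
      have hBend : ∀ x, G.IsEnd d x → x ∈ B := by
        intro x hx
        rcases hx with h | h
        · exact h ▸ (hEBends d hdEB).1
        · exact h ▸ (hEBends d hdEB).2
      refine Finset.mem_erase.2 ⟨farEnd_ne (hEBbr d hdEB) r, ?_⟩
      exact Finset.mem_filter.2 ⟨Finset.mem_univ _,
        hBend _ (farEnd_isEnd S d r), d, ((hEBmem d).1 hdEB).1, farEnd_isEnd S d r⟩
    · intro d₁ hd₁ d₂ hd₂ heq
      by_contra hne
      have heq' : G.farEnd S d₁ r = G.farEnd S d₂ r := heq
      have h₁EB : d₁ ∈ EB := (Finset.mem_filter.1 (Finset.mem_coe.1 hd₁)).2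
      have h₂EB : d₂ ∈ EB := (Finset.mem_filter.1 (Finset.mem_coe.1 hd₂)).2
      exact far_eq_contra hS (hsub ((hEBmem d₁).1 h₁EB).1) (hsub ((hEBmem d₂).1 h₂EB).1)
        hne (farEnd_isEnd S d₁ r) (heq'.symm ▸ farEnd_isEnd S d₂ r)
        (farEnd_not_reaches (hEBbr d₁ h₁EB) r)
        (heq'.symm ▸ farEnd_not_reaches (hEBbr d₂ h₂EB) r)
  have hWpos : 1 ≤ Wf.card := Finset.card_pos.2 ⟨r, hrW⟩
  rw [Finset.card_erase_of_mem hrW] at hinj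
  omega

end LooplessMetricGraph
namespace LooplessMetricGraph

variable {G : LooplessMetricGraph}

/-- From a walk we can extract a simple path. -/
lemma exists_path (c₀ : G.E) {S : Set G.E} {a b : G.V} (h : G.Reaches S a b) :
    ∃ (k : ℕ) (v : ℕ → G.V) (p : ℕ → G.E),
      v 0 = a ∧ v k = b ∧
      (∀ i < k, p i ∈ S ∧ ((G.src (p i) = v i ∧ G.dst (p i) = v (i+1)) ∨
        (G.src (p i) = v (i+1) ∧ G.dst (p i) = v i))) ∧
      (∀ i ≤ k, ∀ j ≤ k, v i = v j → i = j) := by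
  induction h with
  | refl =>
      exact ⟨0, fun _ => a, fun _ => c₀, rfl, rfl,
        fun i hi => absurd hi (by omega), fun i hi j hj _ => by omega⟩
  | @tail w b' hab hstep ih =>
      obtain ⟨k, v, p, hv0, hvk, hedge, hinj⟩ := ih
      obtain ⟨d, hdS, hor⟩ := hstep
      by_cases hbmem : ∃ i, i ≤ k ∧ v i = b'
      · obtain ⟨i, hik, hvi⟩ := hbmem
        exact ⟨i, v, p, hv0, hvi,
          fun j hj => hedge j (lt_of_lt_of_le hj hik),
          fun i' h1 j h2 heq => hinj i' (le_trans h1 hik) j (le_trans h2 hik) heq⟩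
      · push_neg at hbmem
        refine ⟨k + 1, fun n => if n = k + 1 then b' else v n,
          fun n => if n = k then d else p n, ?_, ?_, ?_, ?_⟩
        · simp [hv0]
        · simp
        · intro i hi
          simp only []
          by_cases hik : i = k
          · subst hik
            have h1 : (if i = i then d else p i) = d := by simp
            have h2 : (if i = i + 1 then b' else v i) = v i := by
              simp [Nat.ne_of_lt (Nat.lt_succ_self i)]
            have h3 : (if i + 1 = i + 1 then b' else v (i + 1)) = b' := by simp
            rw [h1, h2, h3, hvk]
            exact ⟨hdS, hor⟩
          · have hik' : i < k := by omega
            have h1 : (if i = k then d else p i) = p i := by simp [hik]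
            have h2 : (if i = k + 1 then b' else v i) = v i := by
              simp [show i ≠ k + 1 by omega]
            have h3 : (if i + 1 = k + 1 then b' else v (i + 1)) = v (i + 1) := by
              simp [show i + 1 ≠ k + 1 by omega, hik]
            rw [h1, h2, h3]
            exact hedge i hik'
        · intro i hi j hj heq
          simp only [] at heq
          by_cases hik : i = k + 1 <;> by_cases hjk : j = k + 1
          · omega
          · rw [if_pos hik, if_neg hjk] at heq
            exact absurd heq.symm (hbmem j (by omega))
          · rw [if_neg hik, if_pos hjk] at heq
            exact absurd heq (hbmem i (by omega))
          · rw [if_neg hik, if_neg hjk] at heq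
            exact hinj i (by omega) j (by omega) heq

end LooplessMetricGraph
namespace LooplessMetricGraph

variable {G : LooplessMetricGraph}

lemma em_eq_cyc {T : Set G.E} (hT : G.IsSpanningTree T) {e : G.E} (he : e ∉ T)
    {EM : Set G.E} (hsub : EM ⊆ T ∪ {e}) (hne : EM.Nonempty)
    (hdeg : ∀ v : G.V, (∃ d ∈ EM, G.IsEnd d v) → 2 ≤ G.degIn EM v) :
    EM = {c | c ∈ T ∪ {e} ∧ G.SpanningConnected ((T ∪ {e}) \ {c})} := by
  classical
  have hTbr : ∀ c ∈ T, G.BridgeIn T c := by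
    intro c hc hre
    exact hT.2 c hc (fun v w => Reaches.avoid hre (hT.1 v w))
  have hTe : G.SpanningConnected (T ∪ {e}) :=
    fun v w => (hT.1 v w).mono Set.subset_union_left
  obtain ⟨k, v, p, hv0, hvk, hedge, hinj⟩ := exists_path e (hT.1 (G.src e) (G.dst e))
  have hseg : ∀ (S' : Set G.E) (i j : ℕ), i ≤ j → j ≤ k →
      (∀ m, i ≤ m → m < j → p m ∈ S') → G.Reaches S' (v i) (v j) := by
    intro S' i j hij hjk hmem
    induction j, hij using Nat.le_induction with
    | base => exact .refl
    | succ j hij ih =>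
        have hstep : G.Step S' (v j) (v (j + 1)) :=
          ⟨p j, hmem j hij (Nat.lt_succ_self j), (hedge j (by omega)).2⟩
        exact (ih (by omega) (fun m h1 h2 => hmem m h1 (by omega))).tail' hstep
  have hpT : ∀ i < k, p i ∈ T := fun i hi => (hedge i hi).1
  have hpne : ∀ i < k, p i ≠ e := fun i hi h => he (h ▸ hpT i hi)
  have hpdist : ∀ i < k, ∀ j < k, p i = p j → i = j := by
    intro i hi j hj hpp
    rcases (hedge i hi).2 with ⟨h1, h2⟩ | ⟨h1, h2⟩ <;>
      rcases (hedge j hj).2 with ⟨h3, h4⟩ | ⟨h3, h4⟩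
    · exact hinj i (by omega) j (by omega) (by rw [← h1, hpp, h3])
    · have e1 : v i = v (j + 1) := by rw [← h1, hpp, h3]
      have e2 : v (i + 1) = v j := by rw [← h2, hpp, h4]
      have := hinj i (by omega) (j + 1) (by omega) e1
      have := hinj (i + 1) (by omega) j (by omega) e2
      omega
    · have e1 : v (i + 1) = v j := by rw [← h1, hpp, h3]
      have e2 : v i = v (j + 1) := by rw [← h2, hpp, h4]
      have := hinj (i + 1) (by omega) j (by omega) e1
      have := hinj i (by omega) (j + 1) (by omega) e2
      omega
    · have := hinj (i + 1) (by omega) (j + 1) (by omega) (by rw [← h1, hpp, h3])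
      omega
  have hnotvv : ∀ i < k, ¬ G.Reaches (T \ {p i}) (v i) (v (i + 1)) := by
    intro i hi hr
    rcases (hedge i hi).2 with ⟨h1, h2⟩ | ⟨h1, h2⟩
    · exact hTbr (p i) (hpT i hi) (by rw [h1, h2]; exact hr)
    · exact hTbr (p i) (hpT i hi) (by rw [h1, h2]; exact hr.symm)
  have hab : ∀ i < k, ¬ G.Reaches (T \ {p i}) (v 0) (v k) := by
    intro i hi hr
    have h1 : G.Reaches (T \ {p i}) (v 0) (v i) :=
      hseg _ 0 i (by omega) (by omega) (fun m h1 h2 =>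
        ⟨hpT m (by omega), by
          simp only [Set.mem_singleton_iff]
          exact fun hq => absurd (hpdist m (by omega) i hi hq) (by omega)⟩)
    have h2 : G.Reaches (T \ {p i}) (v (i + 1)) (v k) :=
      hseg _ (i + 1) k (by omega) le_rfl (fun m h1 h2 =>
        ⟨hpT m (by omega), by
          simp only [Set.mem_singleton_iff]
          exact fun hq => absurd (hpdist m (by omega) i hi hq) (by omega)⟩)
    exact hnotvv i hi ((h1.symm.trans hr).trans h2.symm)
  obtain ⟨Z, hZdef⟩ : ∃ Z : Set G.E, Z = {c | c = e ∨ ∃ i, i < k ∧ p i = c} := ⟨_, rfl⟩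
  have hZmem : ∀ c, c ∈ Z ↔ (c = e ∨ ∃ i, i < k ∧ p i = c) := fun c => by
    rw [hZdef]; exact Iff.rfl
  have heZ : e ∈ Z := (hZmem e).2 (Or.inl rfl)
  have hpZ : ∀ i < k, p i ∈ Z := fun i hi => (hZmem _).2 (Or.inr ⟨i, hi, rfl⟩)
  have hstepE : ∀ (S' : Set G.E), e ∈ S' → G.Step S' (v 0) (v k) :=
    fun S' hmem => ⟨e, hmem, Or.inl ⟨hv0.symm, hvk.symm⟩⟩
  -- cycle edges keep spanning connectivity
  have hZC : ∀ c ∈ Z, G.SpanningConnected ((T ∪ {e}) \ {c}) := by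
    intro c hcZ
    rcases (hZmem c).1 hcZ with heq | ⟨i, hi, heq⟩
    · intro v' w'
      refine (hT.1 v' w').mono (fun x hx => ?_)
      refine ⟨Or.inl hx, ?_⟩
      simp only [Set.mem_singleton_iff]
      rintro rfl
      exact he (heq ▸ hx)
    · subst heq
      have hsub' : ∀ m < k, m ≠ i → p m ∈ ((T ∪ {e}) \ {p i}) := fun m hm hmi =>
        ⟨Or.inl (hpT m hm), by
          simp only [Set.mem_singleton_iff]
          exact fun hq => hmi (hpdist m hm i hi hq)⟩
      have h1 : G.Reaches ((T ∪ {e}) \ {p i}) (v i) (v 0) :=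
        (hseg _ 0 i (by omega) (by omega) (fun m hm1 hm2 => hsub' m (by omega) (by omega))).symm
      have h2 : G.Reaches ((T ∪ {e}) \ {p i}) (v 0) (v k) :=
        Relation.ReflTransGen.single (hstepE _
          ⟨Or.inr rfl, by simp only [Set.mem_singleton_iff]; exact (hpne i hi).symm⟩)
      have h3 : G.Reaches ((T ∪ {e}) \ {p i}) (v k) (v (i + 1)) :=
        (hseg _ (i + 1) k (by omega) le_rfl (fun m hm1 hm2 => hsub' m (by omega) (by omega))).symm
      have hcomb : G.Reaches ((T ∪ {e}) \ {p i}) (v i) (v (i + 1)) :=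
        (h1.trans h2).trans h3
      have hr : G.Reaches ((T ∪ {e}) \ {p i}) (G.src (p i)) (G.dst (p i)) := by
        rcases (hedge i hi).2 with ⟨h1', h2'⟩ | ⟨h1', h2'⟩
        · rw [h1', h2']; exact hcomb
        · rw [h1', h2']; exact hcomb.symm
      exact fun v' w' => Reaches.avoid hr (hTe v' w')
  -- tree edges not on the cycle are bridges in T ∪ {e}
  have hbrTe : ∀ c ∈ T, c ∉ Z → G.BridgeIn (T ∪ {e}) c := by
    intro c hcT hcZ hre
    have hce : e ≠ c := fun h => hcZ (h ▸ heZ)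
    have hset : (T ∪ {e}) \ {c} = insert e (T \ {c}) := by
      ext x
      simp only [Set.mem_diff, Set.mem_union, Set.mem_singleton_iff, Set.mem_insert_iff]
      constructor
      · rintro ⟨hx1 | hx2, hxc⟩
        · exact Or.inr ⟨hx1, hxc⟩
        · exact Or.inl hx2
      · rintro (rfl | ⟨hxT, hxc⟩)
        · exact ⟨Or.inr rfl, fun h => hce h⟩
        · exact ⟨Or.inl hxT, hxc⟩
    rw [hset] at hre
    have hfull : G.Reaches (T \ {c}) (v 0) (v k) :=
      hseg _ 0 k (by omega) le_rfl (fun m h1 h2 =>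
        ⟨hpT m h2, by
          simp only [Set.mem_singleton_iff]
          exact fun hq => hcZ ((hZmem c).2 (Or.inr ⟨m, h2, hq⟩))⟩)
    rcases reaches_insert_cases hre with h' | ⟨h1, h2⟩
    · exact hTbr c hcT h'
    · rw [← hv0, ← hvk] at h1 h2
      apply hTbr c hcT
      rcases h1 with h1 | h1 <;> rcases h2 with h2 | h2
      · exact h1.trans h2
      · exact h1.trans (hfull.trans h2)
      · exact h1.trans (hfull.symm.trans h2)
      · exact h1.trans h2
  -- EM is contained in the cycle
  have hEMZ : EM ⊆ Z := by
    intro c hcEM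
    by_contra hcZ
    have hcT : c ∈ T := by
      rcases hsub hcEM with h | h
      · exact h
      · exact absurd (Set.mem_singleton_iff.1 h ▸ heZ) hcZ
    refine no_two_deg hTe hsub hcEM (hbrTe c hcT hcZ) (v 0) ?_ hdeg
    intro c' hc' hcc' hnr
    have hc'Z : c' ∉ Z := by
      intro hc'Z
      apply hnr
      have hmm : ∀ m < k, p m ∈ ((T ∪ {e}) \ {c}) := fun m hm =>
        ⟨Or.inl (hpT m hm), by
          simp only [Set.mem_singleton_iff]
          exact fun hq => hcZ ((hZmem c).2 (Or.inr ⟨m, hm, hq⟩))⟩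
      rcases (hZmem c').1 hc'Z with rfl | ⟨j, hj, rfl⟩
      · rw [← hv0]
        exact Reaches.refl
      · rcases (hedge j hj).2 with ⟨h1, h2⟩ | ⟨h1, h2⟩
        · rw [h1]
          exact hseg _ 0 j (by omega) (by omega) (fun m hm1 hm2 => hmm m (by omega))
        · rw [h1]
          exact hseg _ 0 (j + 1) (by omega) (by omega) (fun m hm1 hm2 => hmm m (by omega))
    have hc'T : c' ∈ T := by
      rcases hsub hc' with h | h
      · exact h
      · exact absurd (Set.mem_singleton_iff.1 h ▸ heZ) hc'Z
    exact hbrTe c' hc'T hc'Z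
  -- every edge of (T ∪ {e}) \ {p i} is a bridge there
  have hUbr : ∀ i, i < k → ∀ d, d ∈ T ∪ {e} → d ≠ p i →
      G.BridgeIn ((T ∪ {e}) \ {p i}) d := by
    intro i hi d hdU hdpi hre
    rcases hdU with hdT | hde
    · -- d ∈ T
      have hset : ((T ∪ {e}) \ {p i}) \ {d} = insert e ((T \ {p i}) \ {d}) := by
        ext x
        simp only [Set.mem_diff, Set.mem_union, Set.mem_singleton_iff, Set.mem_insert_iff]
        constructor
        · rintro ⟨⟨hx1 | hx2, hxp⟩, hxd⟩
          · exact Or.inr ⟨⟨hx1, hxp⟩, hxd⟩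
          · exact Or.inl hx2
        · rintro (rfl | ⟨⟨hxT, hxp⟩, hxd⟩)
          · refine ⟨⟨Or.inr rfl, ?_⟩, ?_⟩
            · exact (hpne i hi).symm
            · intro h; exact he (h ▸ hdT)
          · exact ⟨⟨Or.inl hxT, hxp⟩, hxd⟩
      rw [hset] at hre
      have hsubi : ((T \ {p i}) \ {d}) ⊆ T \ {p i} := fun x hx => hx.1
      have hsubd : ((T \ {p i}) \ {d}) ⊆ T \ {d} := fun x hx => ⟨hx.1.1, hx.2⟩
      rcases reaches_insert_cases hre with h' | ⟨h1, h2⟩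
      · exact hTbr d hdT (h'.mono hsubd)
      · rw [← hv0, ← hvk] at h1 h2
        by_cases hdZ : d ∈ Z
        · -- d is a cycle edge p j
          rcases (hZmem d).1 hdZ with rfl | ⟨j, hj, hpj⟩
          · exact he hdT
          subst hpj
          have hij : i ≠ j := fun h => hdpi (by rw [h])
          have hS0mem : ∀ m < k, m ≠ i → m ≠ j → p m ∈ ((T \ {p i}) \ {p j}) := by
            intro m hm hmi hmj
            exact ⟨⟨hpT m hm, by
              simp only [Set.mem_singleton_iff]
              exact fun hq => hmi (hpdist m hm i hi hq)⟩, by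
              simp only [Set.mem_singleton_iff]
              exact fun hq => hmj (hpdist m hm j hj hq)⟩
          -- normalize h1 h2 into statements about v j and v (j+1)
          have combo : G.Reaches ((T \ {p i}) \ {p j}) (v j) (v 0) ∨
              G.Reaches ((T \ {p i}) \ {p j}) (v j) (v k) →
              (G.Reaches ((T \ {p i}) \ {p j}) (v (j + 1)) (v 0) ∨
              G.Reaches ((T \ {p i}) \ {p j}) (v (j + 1)) (v k)) → False := by
            intro hA hB
            rcases Nat.lt_or_ge i j with hij' | hij'
            · -- i < j
              have seg1 : G.Reaches ((T \ {p i}) \ {p j}) (v 0) (v i) :=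
                hseg _ 0 i (by omega) (by omega)
                  (fun m h1' h2' => hS0mem m (by omega) (by omega) (by omega))
              have seg2 : G.Reaches ((T \ {p i}) \ {p j}) (v (i + 1)) (v j) :=
                hseg _ (i + 1) j (by omega) (by omega)
                  (fun m h1' h2' => hS0mem m (by omega) (by omega) (by omega))
              have seg3 : G.Reaches ((T \ {p i}) \ {p j}) (v (j + 1)) (v k) :=
                hseg _ (j + 1) k (by omega) (by omega)
                  (fun m h1' h2' => hS0mem m (by omega) (by omega) (by omega))
              rcases hA with hA | hA
              · exact hnotvv i hi
                  (((seg1.symm.trans hA.symm).trans seg2.symm).mono hsubi)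
              · rcases hB with hB | hB
                · have hci : G.Reaches ((T \ {p i}) \ {p j}) (v i) (v (j + 1)) :=
                    seg1.symm.trans hB.symm
                  have hci2 : G.Reaches ((T \ {p i}) \ {p j}) (v (i + 1)) (v (j + 1)) :=
                    seg2.trans (hA.trans seg3.symm)
                  exact hnotvv i hi ((hci.trans hci2.symm).mono hsubi)
                · have hsubj : ((T \ {p i}) \ {p j}) ⊆ T \ {p j} :=
                    fun x hx => ⟨hx.1.1, hx.2⟩
                  exact hnotvv j hj ((hA.trans hB.symm).mono hsubj)
            · -- j < i
              have hij'' : j < i := by omega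
              have seg1 : G.Reaches ((T \ {p i}) \ {p j}) (v 0) (v j) :=
                hseg _ 0 j (by omega) (by omega)
                  (fun m h1' h2' => hS0mem m (by omega) (by omega) (by omega))
              have seg2 : G.Reaches ((T \ {p i}) \ {p j}) (v (j + 1)) (v i) :=
                hseg _ (j + 1) i (by omega) (by omega)
                  (fun m h1' h2' => hS0mem m (by omega) (by omega) (by omega))
              have seg3 : G.Reaches ((T \ {p i}) \ {p j}) (v (i + 1)) (v k) :=
                hseg _ (i + 1) k (by omega) (by omega)
                  (fun m h1' h2' => hS0mem m (by omega) (by omega) (by omega))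
              have hsubj : ((T \ {p i}) \ {p j}) ⊆ T \ {p j} :=
                fun x hx => ⟨hx.1.1, hx.2⟩
              rcases hA with hA | hA
              · rcases hB with hB | hB
                · exact hnotvv j hj ((hA.trans hB.symm).mono hsubj)
                · exact hnotvv i hi
                    ((seg2.symm.trans (hB.trans seg3.symm)).mono hsubi)
              · rcases hB with hB | hB
                · exact hnotvv j hj ((hB.trans seg1).symm.mono hsubj)
                · exact hnotvv i hi
                    ((seg2.symm.trans (hB.trans seg3.symm)).mono hsubi)
          rcases (hedge j hj).2 with ⟨hj1, hj2⟩ | ⟨hj1, hj2⟩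
          · rw [hj1] at h1
            rw [hj2] at h2
            refine combo h1 ?_
            rcases h2 with h2 | h2
            · exact Or.inl h2.symm
            · exact Or.inr h2.symm
          · rw [hj1] at h1
            rw [hj2] at h2
            refine combo ?_ h1
            rcases h2 with h2 | h2
            · exact Or.inl h2.symm
            · exact Or.inr h2.symm
        · -- d is not a cycle edge
          have hsubd2 : ((T \ {p i}) \ {d}) ⊆ T \ {d} := fun x hx => ⟨hx.1.1, hx.2⟩
          have hfull : G.Reaches (T \ {d}) (v 0) (v k) :=
            hseg _ 0 k (by omega) le_rfl (fun m h1' h2' =>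
              ⟨hpT m h2', by
                simp only [Set.mem_singleton_iff]
                exact fun hq => hdZ ((hZmem d).2 (Or.inr ⟨m, h2', hq⟩))⟩)
          apply hTbr d hdT
          replace h1 := h1.imp (fun h => h.mono hsubd2) (fun h => h.mono hsubd2)
          replace h2 := h2.imp (fun h => h.mono hsubd2) (fun h => h.mono hsubd2)
          rcases h1 with h1 | h1 <;> rcases h2 with h2 | h2
          · exact h1.trans h2
          · exact h1.trans (hfull.trans h2)
          · exact h1.trans (hfull.symm.trans h2)
          · exact h1.trans h2
    · -- d = e
      have hde' : d = e := Set.mem_singleton_iff.1 hde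
      rw [hde'] at hre
      have hsub' : (((T ∪ {e}) \ {p i}) \ {e}) ⊆ T \ {p i} := by
        rintro x ⟨⟨hx1 | hx2, hxp⟩, hxd⟩
        · exact ⟨hx1, hxp⟩
        · exact absurd hx2 hxd
      have hre' := hre.mono hsub'
      rw [← hv0, ← hvk] at hre'
      exact hab i hi hre'
  -- the cycle is contained in EM
  have hZEM : Z ⊆ EM := by
    intro c hcZ
    by_contra hcEM
    obtain ⟨c₀, hc₀⟩ := hne
    have hSsc : G.SpanningConnected ((T ∪ {e}) \ {c}) := hZC c hcZ
    have hsub' : EM ⊆ (T ∪ {e}) \ {c} := fun x hx =>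
      ⟨hsub hx, by simp only [Set.mem_singleton_iff]; rintro rfl; exact hcEM hx⟩
    have hallbr : ∀ d ∈ EM, G.BridgeIn ((T ∪ {e}) \ {c}) d := by
      intro d hd
      rcases (hZmem c).1 hcZ with heq | ⟨i, hi, heq⟩
      · have hsetT : (T ∪ {e}) \ {c} = T := by
          rw [heq]
          ext x
          simp only [Set.mem_diff, Set.mem_union, Set.mem_singleton_iff]
          constructor
          · rintro ⟨hx1 | hx2, hxc⟩
            · exact hx1
            · exact absurd hx2 hxc
          · intro hx
            exact ⟨Or.inl hx, fun h => he (h ▸ hx)⟩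
        rw [hsetT]
        have hdT : d ∈ T := by
          have := hsub' hd
          rw [hsetT] at this
          exact this
        exact hTbr d hdT
      · rw [← heq]
        refine hUbr i hi d (hsub hd) ?_
        have h2 := (hsub' hd).2
        simp only [Set.mem_singleton_iff] at h2
        intro h
        exact h2 (by rw [h, heq])
    exact no_two_deg hSsc hsub' hc₀ (hallbr c₀ hc₀) (v 0)
      (fun c' hc' _ _ => hallbr c' hc') hdeg
  -- conclusion
  ext c
  constructor
  · intro hc
    exact ⟨hsub hc, hZC c (hEMZ hc)⟩
  · rintro ⟨hcU, hcsc⟩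
    apply hZEM
    by_contra hcZ
    rcases hcU with hcT | hce
    · exact hbrTe c hcT hcZ (hcsc (G.src c) (G.dst c))
    · exact hcZ (Set.mem_singleton_iff.1 hce ▸ heZ)

end LooplessMetricGraph
/-! ### Analysis of piecewise affine functions -/

lemma exists_piece {n : ℕ} (tt : Fin (n + 1) → ℝ) {t : ℝ}
    (h0 : tt 0 ≤ t) (hl : t < tt (Fin.last n)) :
    ∃ j : Fin n, tt j.castSucc ≤ t ∧ t < tt j.succ := by
  classical
  have hne : (Finset.univ.filter fun i : Fin (n + 1) => t < tt i).Nonempty :=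
    ⟨Fin.last n, Finset.mem_filter.2 ⟨Finset.mem_univ _, hl⟩⟩
  set i₀ := (Finset.univ.filter fun i : Fin (n + 1) => t < tt i).min' hne with hi₀def
  have hi₀t : t < tt i₀ := (Finset.mem_filter.1 (Finset.min'_mem _ hne)).2
  have hmin : ∀ i, t < tt i → i₀ ≤ i := fun i hi =>
    Finset.min'_le _ i (Finset.mem_filter.2 ⟨Finset.mem_univ _, hi⟩)
  have hv0 : i₀.val ≠ 0 := by
    intro h
    have h' : i₀ = 0 := Fin.ext h
    rw [h'] at hi₀t
    exact absurd hi₀t (not_lt.2 h0)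
  have hvn : i₀.val - 1 < n := by have := i₀.isLt; omega
  refine ⟨⟨i₀.val - 1, hvn⟩, ?_, ?_⟩
  · by_contra hcon
    push_neg at hcon
    have h2 := hmin _ hcon
    rw [Fin.le_def] at h2
    simp only [Fin.coe_castSucc] at h2
    omega
  · have heq : (Fin.succ ⟨i₀.val - 1, hvn⟩) = i₀ := by
      apply Fin.ext
      simp only [Fin.val_succ]
      omega
    rw [heq]
    exact hi₀t

lemma exists_piece_left {n : ℕ} (tt : Fin (n + 1) → ℝ) {t : ℝ}
    (h0 : tt 0 < t) (hl : t ≤ tt (Fin.last n)) :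
    ∃ j : Fin n, tt j.castSucc < t ∧ t ≤ tt j.succ := by
  classical
  have hne : (Finset.univ.filter fun i : Fin (n + 1) => tt i < t).Nonempty :=
    ⟨0, Finset.mem_filter.2 ⟨Finset.mem_univ _, h0⟩⟩
  set i₀ := (Finset.univ.filter fun i : Fin (n + 1) => tt i < t).max' hne with hi₀def
  have hi₀t : tt i₀ < t := (Finset.mem_filter.1 (Finset.max'_mem _ hne)).2
  have hmax : ∀ i, tt i < t → i ≤ i₀ := fun i hi =>
    Finset.le_max' _ i (Finset.mem_filter.2 ⟨Finset.mem_univ _, hi⟩)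
  have hv0 : i₀.val ≠ n := by
    intro h
    have h' : i₀ = Fin.last n := Fin.ext h
    rw [h'] at hi₀t
    exact absurd hi₀t (not_lt.2 hl)
  have hvn : i₀.val < n := by have := i₀.isLt; omega
  refine ⟨⟨i₀.val, hvn⟩, ?_, ?_⟩
  · show tt (Fin.castSucc ⟨i₀.val, hvn⟩) < t
    have heq : Fin.castSucc ⟨i₀.val, hvn⟩ = i₀ := Fin.ext rfl
    rw [heq]
    exact hi₀t
  · by_contra hcon
    push_neg at hcon
    have h2 := hmax _ hcon
    rw [Fin.le_def] at h2
    simp only [Fin.val_succ] at h2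
    omega

lemma PwIntAffineOn.exists_right {g : ℝ → ℝ} {a b : ℝ} (hg : PwIntAffineOn g a b)
    {t : ℝ} (hat : a ≤ t) (htb : t < b) :
    ∃ s : ℤ, ∃ δ : ℝ, 0 < δ ∧ t + δ ≤ b ∧
      ∀ x, t ≤ x → x ≤ t + δ → g x = g t + s * (x - t) := by
  obtain ⟨n, tt, ss, cc, h0, hl, hmono, haff⟩ := hg
  obtain ⟨j, hj1, hj2⟩ := exists_piece (t := t) tt (by rw [h0]; exact hat) (by rw [hl]; exact htb)
  refine ⟨ss j, tt j.succ - t, by linarith, ?_, ?_⟩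
  · have h1 : tt j.succ ≤ tt (Fin.last n) := hmono (Fin.le_last _)
    rw [hl] at h1
    linarith
  · intro x hx1 hx2
    have hxm : x ∈ Set.Icc (tt j.castSucc) (tt j.succ) :=
      ⟨le_trans hj1 hx1, by linarith⟩
    have htm : t ∈ Set.Icc (tt j.castSucc) (tt j.succ) := ⟨hj1, le_of_lt hj2⟩
    rw [haff j x hxm, haff j t htm]
    ring

lemma PwIntAffineOn.exists_left {g : ℝ → ℝ} {a b : ℝ} (hg : PwIntAffineOn g a b)
    {t : ℝ} (hat : a < t) (htb : t ≤ b) :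
    ∃ s : ℤ, ∃ δ : ℝ, 0 < δ ∧ a ≤ t - δ ∧
      ∀ x, t - δ ≤ x → x ≤ t → g x = g t + s * (x - t) := by
  obtain ⟨n, tt, ss, cc, h0, hl, hmono, haff⟩ := hg
  obtain ⟨j, hj1, hj2⟩ := exists_piece_left (t := t) tt (by rw [h0]; exact hat) (by rw [hl]; exact htb)
  refine ⟨ss j, t - tt j.castSucc, by linarith, ?_, ?_⟩
  · have h1 : tt 0 ≤ tt j.castSucc := hmono (Fin.zero_le _)
    rw [h0] at h1
    linarith
  · intro x hx1 hx2
    have hxm : x ∈ Set.Icc (tt j.castSucc) (tt j.succ) :=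
      ⟨by linarith, le_trans hx2 hj2⟩
    have htm : t ∈ Set.Icc (tt j.castSucc) (tt j.succ) := ⟨le_of_lt hj1, hj2⟩
    rw [haff j x hxm, haff j t htm]
    ring

lemma HasRightSlope.eq_of_affine {g : ℝ → ℝ} {t s' : ℝ} (h : HasRightSlope g t s')
    {s δ : ℝ} (hδ : 0 < δ)
    (haff : ∀ x, t ≤ x → x ≤ t + δ → g x = g t + s * (x - t)) : s' = s := by
  have hev : (fun _ : ℝ => s) =ᶠ[nhdsWithin 0 (Set.Ioi 0)]
      fun h : ℝ => (g (t + h) - g t) / h := by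
    filter_upwards [Ioo_mem_nhdsGT_of_mem (Set.left_mem_Ico.2 hδ)] with x hx
    rw [haff (t + x) (by linarith [hx.1]) (by linarith [hx.2])]
    rw [show g t + s * (t + x - t) - g t = s * x by ring, mul_div_assoc,
      div_self (ne_of_gt hx.1), mul_one]
  exact tendsto_nhds_unique h (Filter.Tendsto.congr' hev tendsto_const_nhds)

lemma HasLeftSlope.eq_of_affine {g : ℝ → ℝ} {t s' : ℝ} (h : HasLeftSlope g t s')
    {s δ : ℝ} (hδ : 0 < δ)
    (haff : ∀ x, t - δ ≤ x → x ≤ t → g x = g t + s * (x - t)) : s' = -s := by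
  have hev : (fun _ : ℝ => -s) =ᶠ[nhdsWithin 0 (Set.Ioi 0)]
      fun h : ℝ => (g (t - h) - g t) / h := by
    filter_upwards [Ioo_mem_nhdsGT_of_mem (Set.left_mem_Ico.2 hδ)] with x hx
    rw [haff (t - x) (by linarith [hx.2]) (by linarith [hx.1])]
    rw [show g t + s * (t - x - t) - g t = (-s) * x by ring, mul_div_assoc,
      div_self (ne_of_gt hx.1), mul_one]
  exact tendsto_nhds_unique h (Filter.Tendsto.congr' hev tendsto_const_nhds)

/-- Propagation of the minimum value to the right along an interval. -/
lemma spread_right {g : ℝ → ℝ} {L m t₀ : ℝ} (h0 : 0 ≤ t₀) (htL : t₀ < L)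
    (hstart : ∃ δ, 0 < δ ∧ ∀ x, t₀ ≤ x → x ≤ t₀ + δ → x ≤ L → g x = m)
    (hloc : ∀ t, t₀ < t → t < L → g t = m →
      ∃ δ, 0 < δ ∧ ∀ x, t ≤ x → x ≤ t + δ → x ≤ L → g x = m)
    (hleft : ∀ t, t₀ < t → t ≤ L →
      ∃ s : ℝ, ∃ δ, 0 < δ ∧ ∀ x, t - δ ≤ x → x ≤ t → t₀ ≤ x → g x = g t + s * (x - t)) :
    ∀ x, t₀ ≤ x → x ≤ L → g x = m := by
  obtain ⟨δ₀, hδ₀, hc₀⟩ := hstart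
  set A : Set ℝ := {t | t₀ ≤ t ∧ t ≤ L ∧ ∀ x, t₀ ≤ x → x ≤ t → g x = m} with hA
  have hA₀ : t₀ ∈ A := ⟨le_refl _, le_of_lt htL,
    fun x h1 h2 => hc₀ x h1 (by linarith) (by linarith)⟩
  have hbdd : BddAbove A := ⟨L, fun t ht => ht.2.1⟩
  set u := sSup A with hu
  have hu_lb : t₀ ≤ u := le_csSup hbdd hA₀
  have huL : u ≤ L := csSup_le ⟨t₀, hA₀⟩ (fun t ht => ht.2.1)
  have hustep : min (t₀ + δ₀) L ∈ A := by
    refine ⟨le_min (by linarith) (le_of_lt htL), min_le_right _ _, ?_⟩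
    intro x h1 h2
    exact hc₀ x h1 (le_trans h2 (min_le_left _ _)) (le_trans h2 (min_le_right _ _))
  have hut₀ : t₀ < u :=
    lt_of_lt_of_le (lt_min (by linarith) htL) (le_csSup hbdd hustep)
  have huA : ∀ x, t₀ ≤ x → x ≤ u → g x = m := by
    obtain ⟨s, δ₁, hδ₁, haff⟩ := hleft u hut₀ huL
    have hlt : max t₀ (u - δ₁) < u := max_lt hut₀ (by linarith)
    obtain ⟨aa, haaA, haagt⟩ := exists_lt_of_lt_csSup ⟨t₀, hA₀⟩ hlt
    have haau : aa ≤ u := le_csSup hbdd haaA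
    rcases eq_or_lt_of_le haau with rfl | haau'
    · exact haaA.2.2
    · -- aa < u : derive s = 0
      have hx₁ : max t₀ (u - δ₁) ≥ t₀ := le_max_left _ _
      have hgaa : g aa = m := haaA.2.2 aa (by linarith) le_rfl
      have hgx₁ : g (max t₀ (u - δ₁)) = m := haaA.2.2 _ hx₁ (le_of_lt haagt)
      have haff_aa : g aa = g u + s * (aa - u) :=
        haff aa (by
          have := le_max_right t₀ (u - δ₁)
          linarith) (le_of_lt haau') (by linarith)
      have haff_x₁ : g (max t₀ (u - δ₁)) = g u + s * (max t₀ (u - δ₁) - u) :=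
        haff _ (le_max_right _ _) (by linarith) hx₁
      have hs : s = 0 := by
        have h1 : s * (aa - max t₀ (u - δ₁)) = 0 := by
          have := hgaa
          have := hgx₁
          nlinarith [haff_aa, haff_x₁]
        rcases mul_eq_zero.1 h1 with h | h
        · exact h
        · exfalso; linarith [haagt]
      have hgu : g u = m := by
        rw [haff_aa, hs] at hgaa
        linarith [hgaa]
      intro x hx1 hx2
      by_cases hxaa : x ≤ aa
      · exact haaA.2.2 x hx1 hxaa
      · push_neg at hxaa
        have := haff x (by linarith [le_max_right t₀ (u - δ₁), haagt]) hx2 hx1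
        rw [this, hs, hgu]
        ring
  have huLeq : u = L := by
    by_contra hne
    have hult : u < L := lt_of_le_of_ne huL hne
    have hgu : g u = m := huA u hu_lb le_rfl
    obtain ⟨δ₂, hδ₂, hc₂⟩ := hloc u hut₀ hult hgu
    have hmem : min (u + δ₂) L ∈ A := by
      refine ⟨by
        have := lt_min (by linarith : u < u + δ₂) hult
        linarith, min_le_right _ _, ?_⟩
      intro x h1 h2
      by_cases hxu : x ≤ u
      · exact huA x h1 hxu
      · push_neg at hxu
        exact hc₂ x (le_of_lt hxu) (le_trans h2 (min_le_left _ _))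
          (le_trans h2 (min_le_right _ _))
    have := le_csSup hbdd hmem
    have hlt2 : u < min (u + δ₂) L := lt_min (by linarith) hult
    linarith
  intro x hx1 hx2
  exact huA x hx1 (by rw [huLeq]; exact hx2)

/-- Propagation of the minimum value to the left along an interval. -/
lemma spread_left {g : ℝ → ℝ} {m t₀ : ℝ} (h0 : 0 < t₀)
    (hstart : ∃ δ, 0 < δ ∧ ∀ x, t₀ - δ ≤ x → x ≤ t₀ → 0 ≤ x → g x = m)
    (hloc : ∀ t, 0 < t → t < t₀ → g t = m →
      ∃ δ, 0 < δ ∧ ∀ x, t - δ ≤ x → x ≤ t → 0 ≤ x → g x = m)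
    (hright : ∀ t, 0 ≤ t → t < t₀ →
      ∃ s : ℝ, ∃ δ, 0 < δ ∧ ∀ x, t ≤ x → x ≤ t + δ → x ≤ t₀ → g x = g t + s * (x - t)) :
    ∀ x, 0 ≤ x → x ≤ t₀ → g x = m := by
  have main := spread_right (g := fun y => g (t₀ - y)) (L := t₀) (t₀ := 0) (m := m)
    le_rfl h0 ?_ ?_ ?_
  · intro x hx1 hx2
    have h2 : g (t₀ - (t₀ - x)) = m := main (t₀ - x) (by linarith) (by linarith)
    rw [show t₀ - (t₀ - x) = x by ring] at h2
    exact h2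
  · obtain ⟨δ, hδ, hc⟩ := hstart
    exact ⟨δ, hδ, fun y hy1 hy2 hy3 => hc (t₀ - y) (by linarith) (by linarith) (by linarith)⟩
  · intro t ht1 ht2 hgt
    obtain ⟨δ, hδ, hc⟩ := hloc (t₀ - t) (by linarith) (by linarith) hgt
    exact ⟨δ, hδ, fun y hy1 hy2 hy3 => hc (t₀ - y) (by linarith) (by linarith) (by linarith)⟩
  · intro t ht1 ht2
    obtain ⟨s, δ, hδ, hc⟩ := hright (t₀ - t) (by linarith) (by linarith)
    refine ⟨-s, δ, hδ, ?_⟩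
    intro y hy1 hy2 hy3
    have h2 := hc (t₀ - y) (by linarith) (by linarith) (by linarith)
    show g (t₀ - y) = g (t₀ - t) + -s * (y - t)
    rw [h2]
    ring
namespace LooplessMetricGraph

section Defs2
variable (G : LooplessMetricGraph)

/-- The point of `Γ` at arclength `x` along the edge `e'` (clamped). -/
def pointOf (e' : G.E) (x : ℝ) : G.Point :=
  if h : 0 < x ∧ x < G.len e' then Sum.inr ⟨e', x, h⟩
  else if x ≤ 0 then Sum.inl (G.src e') else Sum.inl (G.dst e')

/-- The set of edges on which `f` is identically equal to `m`. -/
def minEdges (f : G.Point → ℝ) (m : ℝ) : Set G.E :=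
  {e' | ∀ x, 0 ≤ x → x ≤ G.len e' → G.edgeFun f e' x = m}

end Defs2

variable {G : LooplessMetricGraph}

lemma edgeFun_pointOf (f : G.Point → ℝ) (e' : G.E) (x : ℝ) :
    G.edgeFun f e' x = f (G.pointOf e' x) := by
  unfold edgeFun pointOf
  split_ifs <;> rfl

lemma edgeFun_src (f : G.Point → ℝ) (e' : G.E) :
    G.edgeFun f e' 0 = f (Sum.inl (G.src e')) := by
  unfold edgeFun
  split_ifs with h1 h2
  · exact absurd h1.1 (lt_irrefl 0)
  · rfl
  · exact absurd le_rfl h2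

lemma edgeFun_dst (f : G.Point → ℝ) (e' : G.E) :
    G.edgeFun f e' (G.len e') = f (Sum.inl (G.dst e')) := by
  unfold edgeFun
  split_ifs with h1 h2
  · exact absurd h1.2 (lt_irrefl _)
  · exact absurd (G.len_pos e') (not_lt.2 h2)
  · rfl

lemma edgeFun_interior (f : G.Point → ℝ) {e' : G.E} (t : ℝ) (ht : 0 < t ∧ t < G.len e') :
    G.edgeFun f e' t = f (Sum.inr ⟨e', t, ht⟩) := by
  unfold edgeFun
  rw [dif_pos ht]

lemma edgeFun_ge {f : G.Point → ℝ} {m : ℝ} (hm : ∀ q, m ≤ f q) (e' : G.E) (x : ℝ) :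
    m ≤ G.edgeFun f e' x := by
  rw [edgeFun_pointOf]
  exact hm _

lemma exists_edge_min (f : G.Point → ℝ) (e' : G.E)
    (htrop : PwIntAffineOn (G.edgeFun f e') 0 (G.len e')) :
    ∃ pe : G.Point, ∀ x, 0 ≤ x → x ≤ G.len e' → f pe ≤ G.edgeFun f e' x := by
  classical
  obtain ⟨n, tt, ss, cc, h0, hl, hmono, haff⟩ := htrop
  obtain ⟨i₀, -, hi₀⟩ := Finset.exists_min_image Finset.univ
    (fun i => G.edgeFun f e' (tt i)) ⟨0, Finset.mem_univ _⟩
  refine ⟨G.pointOf e' (tt i₀), ?_⟩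
  intro x hx1 hx2
  rw [← edgeFun_pointOf f e' (tt i₀)]
  rcases lt_or_eq_of_le hx2 with hxl | hxl
  · obtain ⟨j, hj1, hj2⟩ := exists_piece (t := x) tt (by rw [h0]; exact hx1)
      (by rw [hl]; exact hxl)
    have hcs : tt j.castSucc ≤ tt j.succ := hmono (Fin.castSucc_le_succ j)
    have hgx := haff j x ⟨hj1, le_of_lt hj2⟩
    have hg1 := haff j (tt j.castSucc) ⟨le_rfl, hcs⟩
    have hg2 := haff j (tt j.succ) ⟨hcs, le_rfl⟩
    rcases le_or_gt 0 ((ss j : ℝ)) with hs | hs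
    · have hmul : (ss j : ℝ) * tt j.castSucc ≤ (ss j : ℝ) * x :=
        mul_le_mul_of_nonneg_left hj1 hs
      calc G.edgeFun f e' (tt i₀) ≤ G.edgeFun f e' (tt j.castSucc) :=
            hi₀ _ (Finset.mem_univ _)
        _ ≤ G.edgeFun f e' x := by rw [hgx, hg1]; linarith
    · have hmul : (ss j : ℝ) * tt j.succ ≤ (ss j : ℝ) * x :=
        mul_le_mul_of_nonpos_left (le_of_lt hj2) (le_of_lt hs)
      calc G.edgeFun f e' (tt i₀) ≤ G.edgeFun f e' (tt j.succ) :=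
            hi₀ _ (Finset.mem_univ _)
        _ ≤ G.edgeFun f e' x := by rw [hgx, hg2]; linarith
  · rw [hxl, ← hl]
    exact hi₀ _ (Finset.mem_univ _)

lemma exists_min (f : G.Point → ℝ) (htrop : G.IsTropicalRational f) :
    ∃ p₀ : G.Point, ∀ q, f p₀ ≤ f q := by
  classical
  haveI : Nonempty G.V := G.nonemptyV
  choose pe hpe using fun e' : G.E => G.exists_edge_min f e' (htrop e')
  obtain ⟨p₀, -, hp₀⟩ := Finset.exists_min_image
    ((Finset.univ.image (Sum.inl : G.V → G.Point)) ∪ Finset.univ.image pe) f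
    ⟨Sum.inl (Classical.arbitrary G.V),
      Finset.mem_union_left _ (Finset.mem_image_of_mem _ (Finset.mem_univ _))⟩
  refine ⟨p₀, ?_⟩
  intro q
  rcases q with v | ⟨e', t, ht⟩
  · exact hp₀ _ (Finset.mem_union_left _ (Finset.mem_image_of_mem _ (Finset.mem_univ v)))
  · have h1 : f (Sum.inr ⟨e', t, ht⟩) = G.edgeFun f e' t :=
      (edgeFun_interior f t ht).symm
    rw [h1]
    calc f p₀ ≤ f (pe e') :=
          hp₀ _ (Finset.mem_union_right _ (Finset.mem_image_of_mem _ (Finset.mem_univ e')))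
      _ ≤ G.edgeFun f e' t := hpe e' t (le_of_lt ht.1) (le_of_lt ht.2)

end LooplessMetricGraph
namespace LooplessMetricGraph

variable {G : LooplessMetricGraph}

section MinAnalysis

variable {f : G.Point → ℝ} {D : G.Point → ℤ} {m : ℝ}

lemma interior_min (hdiv : G.HasDivisor f (fun p => D p - G.canonical p))
    (hDeff : ∀ p, 0 ≤ D p) (hm : ∀ q, m ≤ f q)
    {e' : G.E} {t : ℝ} (ht : 0 < t ∧ t < G.len e')
    (hgt : G.edgeFun f e' t = m) :
    D (Sum.inr ⟨e', t, ht⟩) = 0 ∧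
      ∃ δ, 0 < δ ∧ ∀ x, t - δ ≤ x → x ≤ t + δ → G.edgeFun f e' x = m := by
  obtain ⟨sr, sl, hsr, hsl, hsum⟩ := hdiv.2 (Sum.inr ⟨e', t, ht⟩)
  obtain ⟨sP, dP, hdP, hbdP, haffP⟩ :=
    PwIntAffineOn.exists_right (hdiv.1 e') (le_of_lt ht.1) ht.2
  obtain ⟨sM, dM, hdM, hbdM, haffM⟩ :=
    PwIntAffineOn.exists_left (hdiv.1 e') ht.1 (le_of_lt ht.2)
  have hsrE : sr = (sP : ℝ) := hsr.eq_of_affine hdP haffP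
  have hslE : sl = -(sM : ℝ) := hsl.eq_of_affine hdM haffM
  have hpP : (0:ℝ) ≤ (sP:ℝ) := by
    have h1 := haffP (t + dP) (by linarith) le_rfl
    have h2 : m ≤ G.edgeFun f e' (t + dP) := edgeFun_ge hm e' _
    rw [hgt, show t + dP - t = dP by ring] at h1
    by_contra hneg
    push_neg at hneg
    nlinarith
  have hpM : (sM:ℝ) ≤ 0 := by
    have h1 := haffM (t - dM) le_rfl (by linarith)
    have h2 : m ≤ G.edgeFun f e' (t - dM) := edgeFun_ge hm e' _
    rw [hgt, show t - dM - t = -dM by ring] at h1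
    by_contra hneg
    push_neg at hneg
    nlinarith
  have hDge : (0:ℝ) ≤ ((D (Sum.inr ⟨e', t, ht⟩)):ℝ) := by exact_mod_cast hDeff _
  have hcan : G.canonical (Sum.inr ⟨e', t, ht⟩) = 0 := rfl
  simp only [] at hsum
  rw [hsrE, hslE, hcan] at hsum
  push_cast at hsum
  have hs0P : (sP:ℝ) = 0 := by linarith
  have hs0M : (sM:ℝ) = 0 := by linarith
  have hD0 : ((D (Sum.inr ⟨e', t, ht⟩)):ℝ) = 0 := by linarith
  refine ⟨by exact_mod_cast hD0, min dP dM, lt_min hdP hdM, ?_⟩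
  intro x hx1 hx2
  rcases le_total t x with hxt | hxt
  · rw [haffP x hxt (le_trans hx2 (by
      have := min_le_left dP dM
      linarith)), hgt, hs0P]
    ring
  · rw [haffM x (le_trans (by
      have := min_le_right dP dM
      linarith) hx1) hxt, hgt, hs0M]
    ring

lemma edge_min_all (hdiv : G.HasDivisor f (fun p => D p - G.canonical p))
    (hDeff : ∀ p, 0 ≤ D p) (hm : ∀ q, m ≤ f q) {e' : G.E}
    (h : (∃ t, ∃ (hint : 0 < t ∧ t < G.len e'), G.edgeFun f e' t = m) ∨
         (G.edgeFun f e' 0 = m ∧ HasRightSlope (G.edgeFun f e') 0 0) ∨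
         (G.edgeFun f e' (G.len e') = m ∧ HasLeftSlope (G.edgeFun f e') (G.len e') 0)) :
    e' ∈ G.minEdges f m := by
  have hL := G.len_pos e'
  have hlocR : ∀ t, 0 < t → t < G.len e' → G.edgeFun f e' t = m →
      ∃ δ, 0 < δ ∧ ∀ x, t ≤ x → x ≤ t + δ → x ≤ G.len e' → G.edgeFun f e' x = m := by
    intro t h1 h2 h3
    obtain ⟨-, δ, hδ, hc⟩ := interior_min hdiv hDeff hm ⟨h1, h2⟩ h3
    exact ⟨δ, hδ, fun x hx1 hx2 _ => hc x (by linarith) hx2⟩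
  have hlocL : ∀ t, 0 < t → t < G.len e' → G.edgeFun f e' t = m →
      ∃ δ, 0 < δ ∧ ∀ x, t - δ ≤ x → x ≤ t → 0 ≤ x → G.edgeFun f e' x = m := by
    intro t h1 h2 h3
    obtain ⟨-, δ, hδ, hc⟩ := interior_min hdiv hDeff hm ⟨h1, h2⟩ h3
    exact ⟨δ, hδ, fun x hx1 hx2 _ => hc x hx1 (by linarith)⟩
  have haffL : ∀ (t₀ : ℝ), 0 ≤ t₀ → ∀ t, t₀ < t → t ≤ G.len e' →
      ∃ s : ℝ, ∃ δ, 0 < δ ∧ ∀ x, t - δ ≤ x → x ≤ t → t₀ ≤ x →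
        G.edgeFun f e' x = G.edgeFun f e' t + s * (x - t) := by
    intro t₀ ht₀ t h1 h2
    obtain ⟨s, δ, hδ, hbd, haff⟩ :=
      PwIntAffineOn.exists_left (hdiv.1 e') (lt_of_le_of_lt ht₀ h1) h2
    exact ⟨(s:ℝ), δ, hδ, fun x hx1 hx2 _ => haff x hx1 hx2⟩
  have haffR : ∀ t, 0 ≤ t → t < G.len e' →
      ∃ s : ℝ, ∃ δ, 0 < δ ∧ ∀ x, t ≤ x → x ≤ t + δ → x ≤ G.len e' →
        G.edgeFun f e' x = G.edgeFun f e' t + s * (x - t) := by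
    intro t h1 h2
    obtain ⟨s, δ, hδ, hbd, haff⟩ := PwIntAffineOn.exists_right (hdiv.1 e') h1 h2
    exact ⟨(s:ℝ), δ, hδ, fun x hx1 hx2 _ => haff x hx1 hx2⟩
  rcases h with ⟨t, htint, hgt⟩ | ⟨h0m, hs0⟩ | ⟨hLm, hs0⟩
  · obtain ⟨-, δ, hδ, hc⟩ := interior_min hdiv hDeff hm htint hgt
    have hR := spread_right (L := G.len e') (t₀ := t) (le_of_lt htint.1) htint.2
      ⟨δ, hδ, fun x hx1 hx2 _ => hc x (by linarith) hx2⟩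
      (fun u hu1 hu2 hgu => hlocR u (lt_trans htint.1 hu1) hu2 hgu)
      (fun u hu1 hu2 => haffL t (le_of_lt htint.1) u hu1 hu2)
    have hLs := spread_left (t₀ := t) htint.1
      ⟨δ, hδ, fun x hx1 hx2 _ => hc x hx1 (by linarith)⟩
      (fun u hu1 hu2 hgu => hlocL u hu1 (lt_trans hu2 htint.2) hgu)
      (fun u hu1 hu2 => by
        obtain ⟨s, δ', hδ', hc'⟩ := haffR u hu1 (lt_of_lt_of_le hu2 (le_of_lt htint.2))
        exact ⟨s, δ', hδ', fun x h1 h2 h3 =>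
          hc' x h1 h2 (le_trans h3 (le_of_lt htint.2))⟩)
    intro x hx1 hx2
    rcases le_total x t with hxt | hxt
    · exact hLs x hx1 hxt
    · exact hR x hxt hx2
  · obtain ⟨s, δ, hδ, hbd, haff⟩ := PwIntAffineOn.exists_right (hdiv.1 e') le_rfl hL
    have hs' : (0:ℝ) = (s:ℝ) := hs0.eq_of_affine hδ haff
    have hR := spread_right (L := G.len e') (t₀ := 0) le_rfl hL
      ⟨δ, hδ, fun x h1 h2 _ => by rw [haff x h1 h2, h0m, ← hs']; ring⟩
      (fun u hu1 hu2 hgu => hlocR u hu1 hu2 hgu)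
      (fun u hu1 hu2 => haffL 0 le_rfl u hu1 hu2)
    intro x hx1 hx2
    exact hR x hx1 hx2
  · obtain ⟨s, δ, hδ, hbd, haff⟩ := PwIntAffineOn.exists_left (hdiv.1 e') hL le_rfl
    have hs' : (0:ℝ) = -(s:ℝ) := hs0.eq_of_affine hδ haff
    have hLs := spread_left (t₀ := G.len e') hL
      ⟨δ, hδ, fun x h1 h2 _ => by
        rw [haff x h1 h2, hLm, show (s:ℝ) = 0 by linarith]
        ring⟩
      (fun u hu1 hu2 hgu => hlocL u hu1 hu2 hgu)
      (fun u hu1 hu2 => haffR u hu1 hu2)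
    intro x hx1 hx2
    exact hLs x hx1 hx2

lemma vertex_deg (hdiv : G.HasDivisor f (fun p => D p - G.canonical p))
    (hDeff : ∀ p, 0 ≤ D p) (hm : ∀ q, m ≤ f q)
    {v : G.V} (hv : f (Sum.inl v) = m) :
    2 ≤ G.degIn (G.minEdges f m) v := by
  classical
  obtain ⟨sOut, sIn, hOut, hIn, hsum⟩ := hdiv.2 (Sum.inl v)
  have hsrc : ∀ c, G.src c = v → (0 ≤ sOut c ∧ (¬ c ∈ G.minEdges f m → 1 ≤ sOut c)) := by
    intro c hc
    obtain ⟨s, δ, hδ, hbd, haff⟩ :=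
      PwIntAffineOn.exists_right (hdiv.1 c) le_rfl (G.len_pos c)
    have hval : G.edgeFun f c 0 = m := by rw [edgeFun_src, hc, hv]
    have hs : sOut c = (s:ℝ) := (hOut c hc).eq_of_affine hδ haff
    have hpos : (0:ℝ) ≤ (s:ℝ) := by
      have h1 := haff (0 + δ) (by linarith) le_rfl
      have h2 : m ≤ G.edgeFun f c (0 + δ) := edgeFun_ge hm c _
      rw [hval, show (0:ℝ) + δ - 0 = δ by ring] at h1
      by_contra hneg
      push_neg at hneg
      nlinarith
    constructor
    · rw [hs]; exact hpos
    · intro hnot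
      rw [hs]
      have hne : (s:ℝ) ≠ 0 := by
        intro h0
        refine hnot (edge_min_all hdiv hDeff hm (Or.inr (Or.inl ⟨hval, ?_⟩)))
        have h3 := hOut c hc
        rw [hs, h0] at h3
        exact h3
      have hz : (0:ℤ) ≤ s := by exact_mod_cast hpos
      have hz2 : (1:ℤ) ≤ s := by
        rcases lt_or_eq_of_le hz with h | h
        · omega
        · exact absurd (by exact_mod_cast h.symm : (s:ℝ) = 0) hne
      exact_mod_cast hz2
  have hdst : ∀ c, G.dst c = v → (0 ≤ sIn c ∧ (¬ c ∈ G.minEdges f m → 1 ≤ sIn c)) := by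
    intro c hc
    obtain ⟨s, δ, hδ, hbd, haff⟩ :=
      PwIntAffineOn.exists_left (hdiv.1 c) (G.len_pos c) le_rfl
    have hval : G.edgeFun f c (G.len c) = m := by rw [edgeFun_dst, hc, hv]
    have hs : sIn c = -(s:ℝ) := (hIn c hc).eq_of_affine hδ haff
    have hpos : (s:ℝ) ≤ 0 := by
      have h1 := haff (G.len c - δ) le_rfl (by linarith)
      have h2 : m ≤ G.edgeFun f c (G.len c - δ) := edgeFun_ge hm c _
      rw [hval, show G.len c - δ - G.len c = -δ by ring] at h1
      by_contra hneg
      push_neg at hneg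
      nlinarith
    constructor
    · rw [hs]; linarith
    · intro hnot
      rw [hs]
      have hne : (s:ℝ) ≠ 0 := by
        intro h0
        refine hnot (edge_min_all hdiv hDeff hm (Or.inr (Or.inr ⟨hval, ?_⟩)))
        have h3 := hIn c hc
        rw [hs, h0] at h3
        simpa using h3
      have hz : s ≤ (0:ℤ) := by exact_mod_cast hpos
      have hz2 : s ≤ (-1:ℤ) := by
        rcases lt_or_eq_of_le hz with h | h
        · omega
        · exact absurd (by exact_mod_cast h : (s:ℝ) = 0) hne
      have : ((-s : ℤ) : ℝ) = -(s:ℝ) := by push_cast; ring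
      rw [← this]
      exact_mod_cast (by omega : (1:ℤ) ≤ -s)
  -- counting
  have key1 : ((Finset.univ.filter fun e => G.src e = v).card : ℝ) -
      ((Finset.univ.filter fun c => c ∈ G.minEdges f m ∧ G.src c = v).card : ℝ) ≤
      ∑ c ∈ (Finset.univ.filter fun e => G.src e = v), sOut c := by
    have hle : ∑ c ∈ (Finset.univ.filter fun e => G.src e = v),
        (if c ∈ G.minEdges f m then (0:ℝ) else 1) ≤
        ∑ c ∈ (Finset.univ.filter fun e => G.src e = v), sOut c := by
      refine Finset.sum_le_sum ?_
      intro c hc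
      have hcv : G.src c = v := (Finset.mem_filter.1 hc).2
      by_cases hmem : c ∈ G.minEdges f m
      · rw [if_pos hmem]; exact (hsrc c hcv).1
      · rw [if_neg hmem]; exact (hsrc c hcv).2 hmem
    have hsumχ : ∑ c ∈ (Finset.univ.filter fun e => G.src e = v),
        (if c ∈ G.minEdges f m then (0:ℝ) else 1) =
        ((((Finset.univ.filter fun e => G.src e = v)).filter fun c =>
          ¬ c ∈ G.minEdges f m).card : ℝ) := by
      rw [Finset.sum_ite, Finset.sum_const, Finset.sum_const]
      simp
    have hcards := Finset.card_filter_add_card_filter_not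
      (s := Finset.univ.filter fun e => G.src e = v)
      (p := fun c => c ∈ G.minEdges f m)
    have hfeq : (((Finset.univ.filter fun e => G.src e = v)).filter fun c =>
        c ∈ G.minEdges f m) =
        (Finset.univ.filter fun c => c ∈ G.minEdges f m ∧ G.src c = v) := by
      ext c
      simp only [Finset.mem_filter, Finset.mem_univ, true_and]
      tauto
    rw [hfeq] at hcards
    rw [hsumχ] at hle
    have := hcards
    push_cast [← this]
    linarith [hle]
  have key2 : ((Finset.univ.filter fun e => G.dst e = v).card : ℝ) -
      ((Finset.univ.filter fun c => c ∈ G.minEdges f m ∧ G.dst c = v).card : ℝ) ≤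
      ∑ c ∈ (Finset.univ.filter fun e => G.dst e = v), sIn c := by
    have hle : ∑ c ∈ (Finset.univ.filter fun e => G.dst e = v),
        (if c ∈ G.minEdges f m then (0:ℝ) else 1) ≤
        ∑ c ∈ (Finset.univ.filter fun e => G.dst e = v), sIn c := by
      refine Finset.sum_le_sum ?_
      intro c hc
      have hcv : G.dst c = v := (Finset.mem_filter.1 hc).2
      by_cases hmem : c ∈ G.minEdges f m
      · rw [if_pos hmem]; exact (hdst c hcv).1
      · rw [if_neg hmem]; exact (hdst c hcv).2 hmem
    have hsumχ : ∑ c ∈ (Finset.univ.filter fun e => G.dst e = v),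
        (if c ∈ G.minEdges f m then (0:ℝ) else 1) =
        ((((Finset.univ.filter fun e => G.dst e = v)).filter fun c =>
          ¬ c ∈ G.minEdges f m).card : ℝ) := by
      rw [Finset.sum_ite, Finset.sum_const, Finset.sum_const]
      simp
    have hcards := Finset.card_filter_add_card_filter_not
      (s := Finset.univ.filter fun e => G.dst e = v)
      (p := fun c => c ∈ G.minEdges f m)
    have hfeq : (((Finset.univ.filter fun e => G.dst e = v)).filter fun c =>
        c ∈ G.minEdges f m) =
        (Finset.univ.filter fun c => c ∈ G.minEdges f m ∧ G.dst c = v) := by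
      ext c
      simp only [Finset.mem_filter, Finset.mem_univ, true_and]
      tauto
    rw [hfeq] at hcards
    rw [hsumχ] at hle
    push_cast [← hcards]
    linarith [hle]
  have hcan : G.canonical (Sum.inl v) = (G.valAt v : ℤ) - 2 := rfl
  simp only [] at hsum
  rw [hcan] at hsum
  have hvalat : G.valAt v = (Finset.univ.filter fun e => G.src e = v).card +
      (Finset.univ.filter fun e => G.dst e = v).card := rfl
  rw [hvalat] at hsum
  push_cast at hsum
  have hDv : (0:ℝ) ≤ ((D (Sum.inl v)):ℝ) := by exact_mod_cast hDeff _
  have hfinal : (2:ℝ) ≤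
      ((Finset.univ.filter fun c => c ∈ G.minEdges f m ∧ G.src c = v).card : ℝ) +
      ((Finset.univ.filter fun c => c ∈ G.minEdges f m ∧ G.dst c = v).card : ℝ) := by
    linarith [key1, key2]
  unfold degIn
  exact_mod_cast hfinal

end MinAnalysis

end LooplessMetricGraph
/-- **Lemma 3.23.**  Let `G` be a finite connected discrete graph without
loops and let `Γ` be its associated metric graph.  Let `T` be a spanning tree
of `Γ`, let `e` be an edge of `Γ` not contained in `T`, and let `Z(T, e)` be
the unique cycle in `T ∪ e`.  Let `D` be an effective divisor on `Γ`
equivalent to the canonical divisor `K_G` whose support contains a point from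
the relative interior of each edge `e_i ≠ e` contained in the complement of
`T`.  If `f` is a tropical rational function on `Γ` with
`div(f) = D − K_G`, then the locus of points of `Γ` where `f` achieves its
minimum value is equal to `Z(T, e)`. -/
theorem statement_16 (G : LooplessMetricGraph) (hconn : G.Connected)
    (T : Set G.E) (hT : G.IsSpanningTree T) (e : G.E) (he : e ∉ T)
    (D : G.Point → ℤ) (hDfin : (Function.support D).Finite)
    (hDeff : ∀ p, 0 ≤ D p)
    (hDsupp : ∀ e' : G.E, e' ∉ T → e' ≠ e →
      ∃ t : {t : ℝ // 0 < t ∧ t < G.len e'}, D (Sum.inr ⟨e', t⟩) ≠ 0)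
    (f : G.Point → ℝ)
    (hf : G.HasDivisor f (fun p => D p - G.canonical p)) :
    {p | ∀ q, f p ≤ f q} = G.cycleSet T e := by
  classical
  obtain ⟨p₀, hp₀⟩ := LooplessMetricGraph.exists_min f hf.1
  set m := f p₀ with hm_def
  have hm : ∀ q, m ≤ f q := hp₀
  have hset1 : {p | ∀ q, f p ≤ f q} = {p : G.Point | f p = m} := by
    ext p
    simp only [Set.mem_setOf_eq]
    constructor
    · intro h
      exact le_antisymm (h p₀) (hm p)
    · intro h q
      rw [h]
      exact hm q
  have honEdge : ∀ c ∈ G.minEdges f m, G.onEdge c ⊆ {p : G.Point | f p = m} := by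
    intro c hc p hp
    rcases hp with rfl | hp
    · show f (Sum.inl (G.src c)) = m
      rw [← LooplessMetricGraph.edgeFun_src f c]
      exact hc 0 le_rfl (le_of_lt (G.len_pos c))
    rcases hp with rfl | ⟨t, rfl⟩
    · show f (Sum.inl (G.dst c)) = m
      rw [← LooplessMetricGraph.edgeFun_dst f c]
      exact hc (G.len c) (le_of_lt (G.len_pos c)) le_rfl
    · show f (Sum.inr ⟨c, t⟩) = m
      rw [← LooplessMetricGraph.edgeFun_interior f t.1 t.2]
      exact hc t.1 (le_of_lt t.2.1) (le_of_lt t.2.2)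
  have hsub : G.minEdges f m ⊆ T ∪ {e} := by
    intro c hc
    by_contra hcU
    have hcT : c ∉ T := fun h => hcU (Or.inl h)
    have hce : c ≠ e := fun h => hcU (Or.inr h)
    obtain ⟨t, hD⟩ := hDsupp c hcT hce
    have hval : G.edgeFun f c t.1 = m := hc t.1 (le_of_lt t.2.1) (le_of_lt t.2.2)
    have hz := (LooplessMetricGraph.interior_min hf hDeff hm t.2 hval).1
    exact hD hz
  have hmin_cover : {p : G.Point | f p = m} = ⋃ c ∈ G.minEdges f m, G.onEdge c := by
    ext p
    constructor
    · intro hp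
      rcases p with v | ⟨e', t, ht⟩
      · have hvm : f (Sum.inl v) = m := hp
        have h2 := LooplessMetricGraph.vertex_deg hf hDeff hm hvm
        unfold LooplessMetricGraph.degIn at h2
        by_cases h01 : (Finset.univ.filter fun c =>
            c ∈ G.minEdges f m ∧ G.src c = v).card = 0
        · have hbpos : 0 < (Finset.univ.filter fun c =>
              c ∈ G.minEdges f m ∧ G.dst c = v).card := by omega
          obtain ⟨c, hcmem⟩ := Finset.card_pos.1 hbpos
          obtain ⟨-, hcM, hcd⟩ := Finset.mem_filter.1 hcmem
          exact Set.mem_biUnion hcM (Or.inr (Or.inl (by rw [hcd])))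
        · obtain ⟨c, hcmem⟩ := Finset.card_pos.1 (Nat.pos_of_ne_zero h01)
          obtain ⟨-, hcM, hcs⟩ := Finset.mem_filter.1 hcmem
          exact Set.mem_biUnion hcM (Or.inl (by rw [hcs]))
      · have hval : G.edgeFun f e' t = m := by
          rw [LooplessMetricGraph.edgeFun_interior f t ht]
          exact hp
        have hcm : e' ∈ G.minEdges f m :=
          LooplessMetricGraph.edge_min_all hf hDeff hm (Or.inl ⟨t, ht, hval⟩)
        exact Set.mem_biUnion hcm (Or.inr (Or.inr ⟨⟨t, ht⟩, rfl⟩))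
    · intro hp
      rcases Set.mem_iUnion₂.1 hp with ⟨c, hc, hpc⟩
      exact honEdge c hc hpc
  have hdeg : ∀ v, (∃ d ∈ G.minEdges f m, G.IsEnd d v) →
      2 ≤ G.degIn (G.minEdges f m) v := by
    rintro v ⟨d, hd, hend⟩
    have hvm : f (Sum.inl v) = m := by
      rcases hend with h | h
      · rw [← h, ← LooplessMetricGraph.edgeFun_src f d]
        exact hd 0 le_rfl (le_of_lt (G.len_pos d))
      · rw [← h, ← LooplessMetricGraph.edgeFun_dst f d]
        exact hd (G.len d) (le_of_lt (G.len_pos d)) le_rfl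
    exact LooplessMetricGraph.vertex_deg hf hDeff hm hvm
  have hne : (G.minEdges f m).Nonempty := by
    have hp₀m : p₀ ∈ {p : G.Point | f p = m} := rfl
    rw [hmin_cover] at hp₀m
    rcases Set.mem_iUnion₂.1 hp₀m with ⟨c, hc, -⟩
    exact ⟨c, hc⟩
  have hEM := LooplessMetricGraph.em_eq_cyc hT he hsub hne hdeg
  rw [hset1, hmin_cover, hEM]
  rfl

end
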